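/- Highest-weight property of the fundamental monodromy matrix: write T_a(λ) = Σ_{j,k} E_{jk} ⊗ T_{jk}(λ) with T_{jk}(λ) ∈ End((ℂ^N)^{⊗ℓ}), and let v⁺ = e₁ ⊗ ⋯ ⊗ e₁ ∈ (ℂ^N)^{⊗ℓ} (e₁ the first standard basis vector). Then for all λ with λ + a_n ≠ 0 for every n: (i) T_{jk}(λ) v⁺ = 0 whenever 1 ≤ k < j ≤ N; (ii) T_{11}(λ) v⁺ = ∏_{n=1}^ℓ (1 − ħ/(λ + a_n)) · v⁺; and (iii) T_{kk}(λ) v⁺ = v⁺ for 2 ≤ k ≤ N. -/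

import Mathlib

open Matrix Finset

noncomputable section

/-- The permutation operator `P` exchanging the tensor factors `p` and `q`
of `(ℂ^N)^{⊗ I}`, realized on the index type `I → Fin N`. -/
def permOp (N : ℕ) {I : Type} [Fintype I] [DecidableEq I] (p q : I) :
    Matrix (I → Fin N) (I → Fin N) ℂ :=
  fun f g => if f = g ∘ ⇑(Equiv.swap p q) then 1 else 0

/-- The rational R-matrix `R(λ) = I - (ħ/λ) P` acting on the tensor factors
`p` and `q`. -/
def Rmat (N : ℕ) (hbar : ℂ) {I : Type} [Fintype I] [DecidableEq I] (p q : I)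
    (lam : ℂ) : Matrix (I → Fin N) (I → Fin N) ℂ :=
  1 - (hbar / lam) • permOp N p q

/-- The one-site operator acting as the `N × N` matrix `A` on the tensor
factor `p` and as the identity elsewhere. -/
def siteOp (N : ℕ) {I : Type} [Fintype I] [DecidableEq I] (p : I)
    (A : Matrix (Fin N) (Fin N) ℂ) : Matrix (I → Fin N) (I → Fin N) ℂ :=
  fun f g => if Function.update g p (f p) = f then A (f p) (g p) else 0

/-- Ordinary partial transposition in the tensor factor `p`. -/
def ptransp {N : ℕ} {I : Type} [Fintype I] [DecidableEq I] (p : I)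
    (M : Matrix (I → Fin N) (I → Fin N) ℂ) : Matrix (I → Fin N) (I → Fin N) ℂ :=
  fun f g => M (Function.update f p (g p)) (Function.update g p (f p))

/-- The generalized transposition `A ↦ V⁻¹ Aᵀ V` applied in the tensor
factor `p` only. -/
def gtransp {N : ℕ} {I : Type} [Fintype I] [DecidableEq I]
    (V : Matrix (Fin N) (Fin N) ℂ) (p : I)
    (M : Matrix (I → Fin N) (I → Fin N) ℂ) : Matrix (I → Fin N) (I → Fin N) ℂ :=
  siteOp N p V⁻¹ * ptransp p M * siteOp N p V

/-- The antidiagonal matrix with all antidiagonal entries `1` (the case `θ = 1`). -/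
def Vplus (N : ℕ) : Matrix (Fin N) (Fin N) ℂ :=
  fun i j => if (i : ℕ) + (j : ℕ) + 1 = N then 1 else 0

/-- For even `N`, the antidiagonal matrix `antidiag(1,…,1,−1,…,−1)` whose first
`N/2` antidiagonal entries are `1` and last `N/2` are `-1` (the case `θ = -1`). -/
def Vminus (N : ℕ) : Matrix (Fin N) (Fin N) ℂ :=
  fun i j => if (i : ℕ) + (j : ℕ) + 1 = N then (if 2 * (i : ℕ) < N then 1 else -1) else 0

/-- The monodromy matrix `T_a(λ) = L_{a1}(λ) ⋯ L_{aℓ}(λ)` acting on the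
auxiliary space (`Sum.inl ()`) tensored with `ℓ` quantum spaces, where
`L_{an}(λ) = I − ħ P_{an}/(λ + a_n)`. -/
def Tmono (N ℓ : ℕ) (hbar : ℂ) (a : Fin ℓ → ℂ) (lam : ℂ) :
    Matrix ((Unit ⊕ Fin ℓ) → Fin N) ((Unit ⊕ Fin ℓ) → Fin N) ℂ :=
  ((List.finRange ℓ).map
    (fun n => Rmat N hbar (Sum.inl () : Unit ⊕ Fin ℓ) (Sum.inr n) (lam + a n))).prod

/-- The twisted monodromy matrix `S_a(λ) = T_a(λ) K_a T_a^{t_a}(−λ−ħρ)`,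
with `K = diagonal ζ`. -/
def Smat (N ℓ : ℕ) (hbar ρ : ℂ) (a : Fin ℓ → ℂ) (V : Matrix (Fin N) (Fin N) ℂ)
    (ζ : Fin N → ℂ) (lam : ℂ) :
    Matrix ((Unit ⊕ Fin ℓ) → Fin N) ((Unit ⊕ Fin ℓ) → Fin N) ℂ :=
  Tmono N ℓ hbar a lam * siteOp N (Sum.inl ()) (Matrix.diagonal ζ) *
    gtransp V (Sum.inl ()) (Tmono N ℓ hbar a (-lam - hbar * ρ))

/-- Partial trace over the auxiliary tensor factor. -/
def ptrAux (N ℓ : ℕ)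
    (M : Matrix ((Unit ⊕ Fin ℓ) → Fin N) ((Unit ⊕ Fin ℓ) → Fin N) ℂ) :
    Matrix (Fin ℓ → Fin N) (Fin ℓ → Fin N) ℂ :=
  fun f g => ∑ i : Fin N, M (Sum.elim (fun _ => i) f) (Sum.elim (fun _ => i) g)

/-- The transfer matrix `s(λ) = tr_a S_a(λ)`. -/
def transfer (N ℓ : ℕ) (hbar ρ : ℂ) (a : Fin ℓ → ℂ) (V : Matrix (Fin N) (Fin N) ℂ)
    (ζ : Fin N → ℂ) (lam : ℂ) : Matrix (Fin ℓ → Fin N) (Fin ℓ → Fin N) ℂ :=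
  ptrAux N ℓ (Smat N ℓ hbar ρ a V ζ lam)

/-- The operator-valued `(i,j)` entry of a matrix on (auxiliary) ⊗ (ℂ^N)^{⊗ℓ}:
if `M = Σ E_{ij} ⊗ M_{ij}` then `entryOp N ℓ M i j = M_{ij}`. -/
def entryOp (N ℓ : ℕ)
    (M : Matrix ((Unit ⊕ Fin ℓ) → Fin N) ((Unit ⊕ Fin ℓ) → Fin N) ℂ) (i j : Fin N) :
    Matrix (Fin ℓ → Fin N) (Fin ℓ → Fin N) ℂ :=
  fun f g => M (Sum.elim (fun _ => i) f) (Sum.elim (fun _ => j) g)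

/-- The pseudo-vacuum (highest weight) vector `v⁺ = e₁ ⊗ ⋯ ⊗ e₁` of `(ℂ^N)^{⊗ℓ}`. -/
def vplus (N ℓ : ℕ) : (Fin ℓ → Fin N) → ℂ :=
  fun f => if ∀ m, (f m : ℕ) = 0 then 1 else 0

/-- highest-weight property of the fundamental monodromy matrix:
`T_{jk}(λ)v⁺ = 0` for `k < j`, `T_{11}(λ)v⁺ = ∏ₙ(1 − ħ/(λ+aₙ))·v⁺`, and
`T_{kk}(λ)v⁺ = v⁺` for `k ≥ 2`. -/

lemma mul_R_apply {N : ℕ} {I : Type} [Fintype I] [DecidableEq I] (hbar z : ℂ) (p q : I)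
    (M : Matrix (I → Fin N) (I → Fin N) ℂ) (x u : I → Fin N) :
    (M * Rmat N hbar p q z) x u
      = M x u - (hbar / z) * M x (u ∘ ⇑(Equiv.swap p q)) := by
  classical
  simp only [Matrix.mul_apply, Rmat, Matrix.sub_apply, Matrix.smul_apply,
    Matrix.one_apply, permOp, smul_eq_mul, mul_sub, mul_ite, mul_one, mul_zero]
  rw [Finset.sum_sub_distrib]
  congr 1
  · simp [Finset.sum_ite_eq']
  · simp [Finset.sum_ite_eq', mul_comm]

/-- composing with a swap when values at `p`,`q` agree does nothing -/
lemma comp_swap_eq {N : ℕ} {I : Type} [DecidableEq I] (u : I → Fin N) (p q : I)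
    (h : u p = u q) : u ∘ ⇑(Equiv.swap p q) = u := by
  funext x
  simp only [Function.comp_apply, Equiv.swap_apply_def]
  split_ifs with h1 h2 <;> simp_all

abbrev Pprod (N ℓ : ℕ) (hbar lam : ℂ) (a : Fin ℓ → ℂ) (ns : List (Fin ℓ)) :
    Matrix ((Unit ⊕ Fin ℓ) → Fin N) ((Unit ⊕ Fin ℓ) → Fin N) ℂ :=
  ((ns.map (fun n => Rmat N hbar (Sum.inl () : Unit ⊕ Fin ℓ) (Sum.inr n) (lam + a n))).prod)

lemma claimB {N ℓ : ℕ} (hbar lam : ℂ) (a : Fin ℓ → ℂ) (ns : List (Fin ℓ))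
    (u : (Unit ⊕ Fin ℓ) → Fin N) (hu0 : (u (Sum.inl ()) : ℕ) = 0)
    (hum : ∀ m ∈ ns, (u (Sum.inr m) : ℕ) = 0)
    (x : (Unit ⊕ Fin ℓ) → Fin N) (hx : (x (Sum.inl ()) : ℕ) ≠ 0) :
    Pprod N ℓ hbar lam a ns x u = 0 := by
  induction ns using List.reverseRecOn with
  | nil =>
      simp only [Pprod, List.map_nil, List.prod_nil, Matrix.one_apply]
      rw [if_neg]
      intro h; subst h; exact hx hu0
  | append_singleton ns n ih =>
      simp only [Pprod] at ih ⊢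
      rw [List.map_append, List.prod_append, List.map_singleton,
        List.prod_singleton, mul_R_apply]
      rw [comp_swap_eq u _ _ (Fin.ext (by
        rw [hu0, hum n (by simp)]))]
      rw [ih (fun m hm => hum m (by simp [hm]))]
      ring

lemma claimA {N ℓ : ℕ} (hbar lam : ℂ) (a : Fin ℓ → ℂ) (ns : List (Fin ℓ))
    (hnd : ns.Nodup)
    (u : (Unit ⊕ Fin ℓ) → Fin N) (hu0 : (u (Sum.inl ()) : ℕ) ≠ 0)
    (hum : ∀ m, (u (Sum.inr m) : ℕ) = 0)
    (x : (Unit ⊕ Fin ℓ) → Fin N) (hx : (x (Sum.inl ()) : ℕ) ≠ 0) :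
    Pprod N ℓ hbar lam a ns x u = if x = u then 1 else 0 := by
  induction ns using List.reverseRecOn with
  | nil => simp [Pprod, Matrix.one_apply]
  | append_singleton ns n ih =>
      have hnd' : ns.Nodup ∧ n ∉ ns := by
        rw [List.nodup_append] at hnd
        refine ⟨hnd.1, fun hn => ?_⟩
        exact hnd.2.2 n hn n (by simp) rfl
      simp only [Pprod] at ih ⊢
      rw [List.map_append, List.prod_append, List.map_singleton,
        List.prod_singleton, mul_R_apply]
      have hB := claimB hbar lam a ns (u ∘ ⇑(Equiv.swap (Sum.inl ()) (Sum.inr n)))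
        (by simp [hum n]) ?_ x hx
      · simp only [Pprod] at hB
        rw [hB, ih hnd'.1]; ring
      · intro m hm
        have hmn : (Sum.inr m : Unit ⊕ Fin ℓ) ≠ Sum.inr n := by
          simp; rintro rfl; exact hnd'.2 hm
        show (u ((Equiv.swap (Sum.inl ()) (Sum.inr n)) (Sum.inr m)) : ℕ) = 0
        rw [Equiv.swap_apply_of_ne_of_ne (by simp) hmn]
        exact hum m

lemma claimC {N ℓ : ℕ} (hbar lam : ℂ) (a : Fin ℓ → ℂ) (ns : List (Fin ℓ))
    (u : (Unit ⊕ Fin ℓ) → Fin N) (hu : ∀ i, (u i : ℕ) = 0)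
    (x : (Unit ⊕ Fin ℓ) → Fin N) :
    Pprod N ℓ hbar lam a ns x u =
      (ns.map (fun n => 1 - hbar / (lam + a n))).prod * (if x = u then 1 else 0) := by
  induction ns using List.reverseRecOn with
  | nil => simp [Pprod, Matrix.one_apply]
  | append_singleton ns n ih =>
      simp only [Pprod] at ih ⊢
      rw [List.map_append, List.prod_append, List.map_singleton,
        List.prod_singleton, mul_R_apply]
      rw [comp_swap_eq u _ _ (Fin.ext (by rw [hu, hu]))]
      rw [ih, List.map_append, List.prod_append, List.map_singleton, List.prod_singleton]
      ring

theorem monodromy_highest_weight (N ℓ : ℕ) (hN : 2 ≤ N) (hℓ : 1 ≤ ℓ)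
    (hbar : ℂ) (hhbar : hbar ≠ 0) (a : Fin ℓ → ℂ) (lam : ℂ)
    (hpol : ∀ n : Fin ℓ, lam + a n ≠ 0) :
    (∀ j k : Fin N, (k : ℕ) < (j : ℕ) →
        (entryOp N ℓ (Tmono N ℓ hbar a lam) j k).mulVec (vplus N ℓ) = 0) ∧
    (∀ k : Fin N, (k : ℕ) = 0 →
        (entryOp N ℓ (Tmono N ℓ hbar a lam) k k).mulVec (vplus N ℓ) =
          (∏ n : Fin ℓ, (1 - hbar / (lam + a n))) • vplus N ℓ) ∧
    (∀ k : Fin N, 1 ≤ (k : ℕ) →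
        (entryOp N ℓ (Tmono N ℓ hbar a lam) k k).mulVec (vplus N ℓ) = vplus N ℓ) := by
  have hN0 : 0 < N := by omega
  set g₀ : Fin ℓ → Fin N := fun _ => ⟨0, hN0⟩ with hg₀
  have hzero : ∀ g : Fin ℓ → Fin N, (∀ m, ((g m : ℕ) = 0)) ↔ g = g₀ := by
    intro g
    constructor
    · intro h; funext m; exact Fin.ext (h m)
    · rintro rfl m; rfl
  have key : ∀ (j k : Fin N) (f : Fin ℓ → Fin N),
      (entryOp N ℓ (Tmono N ℓ hbar a lam) j k).mulVec (vplus N ℓ) f =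
        Tmono N ℓ hbar a lam (Sum.elim (fun _ => j) f) (Sum.elim (fun _ => k) g₀) := by
    intro j k f
    simp only [Matrix.mulVec, dotProduct, entryOp, vplus, mul_ite, mul_one, mul_zero]
    simp only [hzero]
    simp [Finset.sum_ite_eq']
  have hT : Tmono N ℓ hbar a lam = Pprod N ℓ hbar lam a (List.finRange ℓ) := rfl
  have helim : ∀ (k : Fin N) (f : Fin ℓ → Fin N),
      (Sum.elim (fun _ => k) f = (Sum.elim (fun _ => k) g₀ : (Unit ⊕ Fin ℓ) → Fin N)) ↔
        ∀ m, (f m : ℕ) = 0 := by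
    intro k f
    constructor
    · intro h m
      have := congrFun h (Sum.inr m)
      simpa using congrArg Fin.val this
    · intro h
      funext i
      cases i with
      | inl _ => rfl
      | inr m => exact Fin.ext (h m)
  have hu0g : ∀ k : Fin N, ∀ m : Fin ℓ,
      ((Sum.elim (fun _ => k) g₀ : (Unit ⊕ Fin ℓ) → Fin N) (Sum.inr m) : ℕ) = 0 :=
    fun _ _ => rfl
  refine ⟨?_, ?_, ?_⟩
  · intro j k hjk
    funext f
    rw [Pi.zero_apply, key, hT]
    by_cases hk : (k : ℕ) = 0
    · rw [claimC hbar lam a _ _ (fun i => by cases i <;> simpa [hg₀]) _]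
      rw [if_neg, mul_zero]
      intro h
      have := congrArg Fin.val (congrFun h (Sum.inl ()))
      simp only [Sum.elim_inl] at this
      omega
    · rw [claimA hbar lam a _ (List.nodup_finRange ℓ) _ hk (hu0g k) _
        (by simp only [Sum.elim_inl]; omega)]
      rw [if_neg]
      intro h
      have := congrArg Fin.val (congrFun h (Sum.inl ()))
      simp only [Sum.elim_inl] at this
      omega
  · intro k hk
    funext f
    rw [key, hT, claimC hbar lam a _ _ (fun i => by cases i <;> simpa [hg₀]) _]
    rw [show (List.map (fun n => 1 - hbar / (lam + a n)) (List.finRange ℓ)).prod =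
        ∏ n : Fin ℓ, (1 - hbar / (lam + a n)) from (Fin.prod_univ_def _).symm]
    simp only [Pi.smul_apply, vplus, smul_eq_mul, helim]
  · intro k hk
    funext f
    rw [key, hT, claimA hbar lam a _ (List.nodup_finRange ℓ) _
      (by simp only [Sum.elim_inl]; omega) (hu0g k) _ (by simp only [Sum.elim_inl]; omega)]
    simp only [vplus, helim]
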